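/- arXiv:2309.12127 — 4 statements merged into one kernel-verified Lean document; each statement's English description precedes it below -/
import Mathlib

section
/- Let I be a directed partially ordered set and let {A_i, φ_{ij}} be a directed system of abelian groups indexed by I such that every A_i is a finitely generated abelian group. If the direct limit colim_{i ∈ I} A_i is the trivial group, then for every i ∈ I there exists j ≥ i such that the transition homomorphism φ_{ij} : A_i → A_j is the zero homomorphism. -/
/-- Converse direction of part (1) of the paper's Lemma on filtered systems, for
finitely generated abelian groups: if the direct limit is trivial, then every
transition map is eventually zero. -/
theorem eventually_zero_of_directLimit_trivial
    {ι : Type*} [PartialOrder ι] [IsDirected ι (· ≤ ·)] [DecidableEq ι]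
    (A : ι → Type*) [∀ i, AddCommGroup (A i)]
    (hfg : ∀ i, AddGroup.FG (A i))
    (f : ∀ i j, i ≤ j → A i →+ A j)
    [DirectedSystem A fun i j h => f i j h]
    (h : Subsingleton (AddCommGroup.DirectLimit A f)) :
    ∀ i : ι, ∃ j : ι, ∃ hij : i ≤ j, f i j hij = 0 := by
  intro i
  have : Nonempty ι := ⟨i⟩
  obtain ⟨S, hS⟩ := (hfg i).out
  have hz : ∀ x : A i, ∃ j hij, f i j hij x = 0 := fun x =>
    AddCommGroup.DirectLimit.of.zero_exact i x (Subsingleton.elim _ _)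
  choose j hij hj using hz
  obtain ⟨k, hk⟩ := Finset.exists_le (insert i (S.image j))
  have hik : i ≤ k := hk i (Finset.mem_insert_self _ _)
  refine ⟨k, hik, ?_⟩
  have hker : AddSubgroup.closure (S : Set (A i)) ≤ (f i k hik).ker := by
    rw [AddSubgroup.closure_le]
    intro x hx
    have hjk : j x ≤ k := hk _ (Finset.mem_insert_of_mem (Finset.mem_image_of_mem j hx))
    have : f (j x) k hjk (f i (j x) (hij x) x) = f i k hik x :=
      DirectedSystem.map_map (f := fun i j h => f i j h) (hij x) hjk x
    show f i k hik x = 0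
    rw [← this, hj x, map_zero]
  rw [hS] at hker
  ext x
  simpa using hker (AddSubgroup.mem_top x)
end

section
/- Let I be a directed partially ordered set and let {A_i, φ_{ij}} and {B_i, ψ_{ij}} be two directed systems of abelian groups indexed by the same poset I, with every A_i a finitely generated abelian group. Suppose that for each comparable pair i ≤ j in I there exist group isomorphisms α : A_i ≅ B_i and β : A_j ≅ B_j (possibly depending on the pair (i,j), and not required to be natural) such that β ∘ φ_{ij} = ψ_{ij} ∘ α. Then the direct limit colim_{i ∈ I} A_i is trivial if and only if the direct limit colim_{i ∈ I} B_i is trivial. -/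
/-- If every map in a directed system is eventually zero, the direct limit is trivial. -/
theorem aux_subsingleton_of_eventually_zero {ι : Type*} [PartialOrder ι]
    [IsDirected ι (· ≤ ·)] [DecidableEq ι]
    (C : ι → Type*) [∀ i, AddCommGroup (C i)]
    (h : ∀ i j, i ≤ j → C i →+ C j) [DirectedSystem C fun i j hh => h i j hh]
    (hz : ∀ i, ∃ j, ∃ hij : i ≤ j, ∀ a, h i j hij a = 0) :
    Subsingleton (AddCommGroup.DirectLimit C h) := by
  rcases isEmpty_or_nonempty ι with hι | hι
  · infer_instance
  constructor
  intro x y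
  have hx : ∀ z : AddCommGroup.DirectLimit C h, z = 0 := by
    intro z
    induction z using AddCommGroup.DirectLimit.induction_on with
    | ih i a =>
      obtain ⟨j, hij, hj⟩ := hz i
      rw [← AddCommGroup.DirectLimit.of_f hij a, hj a, map_zero]
  rw [hx x, hx y]

/-- If the direct limit of a directed system of f.g. abelian groups is trivial, then
every map is eventually zero. -/
theorem aux_eventually_zero_of_subsingleton {ι : Type*} [PartialOrder ι]
    [IsDirected ι (· ≤ ·)] [DecidableEq ι]
    (C : ι → Type*) [∀ i, AddCommGroup (C i)] (hfg : ∀ i, AddGroup.FG (C i))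
    (h : ∀ i j, i ≤ j → C i →+ C j) [DirectedSystem C fun i j hh => h i j hh]
    (hs : Subsingleton (AddCommGroup.DirectLimit C h)) :
    ∀ i, ∃ j, ∃ hij : i ≤ j, ∀ a, h i j hij a = 0 := by
  intro i
  haveI : Nonempty ι := ⟨i⟩
  obtain ⟨S, hScl, hSfin⟩ := (AddGroup.fg_iff).mp (hfg i)
  have key : ∀ s : C i, ∃ j, ∃ hij : i ≤ j, h i j hij s = 0 := fun s =>
    AddCommGroup.DirectLimit.of.zero_exact i s (Subsingleton.elim _ _)
  choose jj hij hzero using key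
  obtain ⟨M, hM⟩ := (insert i (hSfin.toFinset.image jj)).exists_le
  have hiM : i ≤ M := hM i (Finset.mem_insert_self _ _)
  refine ⟨M, hiM, fun a => ?_⟩
  have htop : (⊤ : AddSubgroup (C i)) ≤ (h i M hiM).ker := by
    rw [← hScl]
    refine (AddSubgroup.closure_le _).mpr ?_
    intro s hs'
    have hsM : jj s ≤ M :=
      hM _ (Finset.mem_insert_of_mem
        (Finset.mem_image_of_mem _ (hSfin.mem_toFinset.mpr hs')))
    have : h (jj s) M hsM (h i (jj s) (hij s) s) = h i M hiM s :=
      DirectedSystem.map_map (f := fun i j hh => h i j hh) (hij s) hsM s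
    have hzs : h i M hiM s = 0 := by
      rw [← this, hzero s, map_zero]
    exact hzs
  exact htop (AddSubgroup.mem_top a)

/-- Part (2) of the paper's Lemma on filtered systems, for finitely generated abelian
groups: if two directed systems are pairwise (non-naturally) isomorphic, then one
direct limit is trivial iff the other is. -/
theorem directLimit_trivial_iff_of_pairwise_iso
    {ι : Type*} [PartialOrder ι] [IsDirected ι (· ≤ ·)] [DecidableEq ι]
    (A B : ι → Type*) [∀ i, AddCommGroup (A i)] [∀ i, AddCommGroup (B i)]
    (hfg : ∀ i, AddGroup.FG (A i))
    (f : ∀ i j, i ≤ j → A i →+ A j)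
    (g : ∀ i j, i ≤ j → B i →+ B j)
    [DirectedSystem A fun i j h => f i j h]
    [DirectedSystem B fun i j h => g i j h]
    (hiso : ∀ i j (hij : i ≤ j), ∃ (α : A i ≃+ B i) (β : A j ≃+ B j),
      ∀ a : A i, β (f i j hij a) = g i j hij (α a)) :
    Subsingleton (AddCommGroup.DirectLimit A f) ↔
      Subsingleton (AddCommGroup.DirectLimit B g) := by
  have hfgB : ∀ i, AddGroup.FG (B i) := by
    intro i
    obtain ⟨α, -, -⟩ := hiso i i le_rfl
    exact AddGroup.fg_of_surjective (f := α.toAddMonoidHom) α.surjective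
  constructor
  · intro hA
    apply aux_subsingleton_of_eventually_zero
    intro i
    obtain ⟨j, hij, hj⟩ := aux_eventually_zero_of_subsingleton A hfg f hA i
    obtain ⟨α, β, hαβ⟩ := hiso i j hij
    refine ⟨j, hij, fun b => ?_⟩
    have := hαβ (α.symm b)
    rw [hj, map_zero, α.apply_symm_apply] at this
    exact this.symm
  · intro hB
    apply aux_subsingleton_of_eventually_zero
    intro i
    obtain ⟨j, hij, hj⟩ := aux_eventually_zero_of_subsingleton B hfgB g hB i
    obtain ⟨α, β, hαβ⟩ := hiso i j hij
    refine ⟨j, hij, fun a => ?_⟩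
    have := hαβ a
    rw [hj] at this
    exact β.injective (by rw [this, map_zero])
end

section
/- Let 𝒞 be a category with a zero object, let I be a directed partially ordered set regarded as a category, and let F : I → 𝒞 be a functor such that for every i ∈ I there exists j ≥ i for which the transition morphism F(i ≤ j) : F(i) → F(j) is the zero morphism. If the colimit of F exists in 𝒞, then the colimit object is a zero object of 𝒞. -/
open CategoryTheory CategoryTheory.Limits

/-- Forward direction of part (1) of the paper's Lemma on filtered systems, for an
ordinary category with a zero object: if every transition morphism eventually factors
through a zero object, then the colimit (if it exists) is a zero object. -/
theorem colimit_isZero_of_eventually_zero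
    {C : Type*} [Category C] [HasZeroObject C]
    {I : Type*} [PartialOrder I] [IsDirected I (· ≤ ·)]
    (F : I ⥤ C) [HasColimit F]
    (h : ∀ i : I, ∃ j : I, ∃ hij : i ≤ j,
      ∃ Z : C, IsZero Z ∧ ∃ (p : F.obj i ⟶ Z) (q : Z ⟶ F.obj j),
        F.map (homOfLE hij) = p ≫ q) :
    IsZero (colimit F) := by
  obtain ⟨Z0, hZ0⟩ : ∃ Z0 : C, IsZero Z0 := HasZeroObject.zero
  -- cocone into Z0
  let c : Cocone F :=
    { pt := Z0
      ι := { app := fun i => hZ0.from_ _,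
             naturality := fun i j f => hZ0.eq_of_tgt _ _ } }
  let t : colimit F ⟶ Z0 := colimit.desc F c
  let s : Z0 ⟶ colimit F := hZ0.to_ _
  have hts : t ≫ s = 𝟙 (colimit F) := by
    apply colimit.hom_ext
    intro i
    obtain ⟨j, hij, Z, hZ, p, q, hpq⟩ := h i
    have h2 : colimit.ι F i ≫ t = p ≫ (hZ.to_ Z0) := hZ0.eq_of_tgt _ _
    have h3 : q ≫ colimit.ι F j = (hZ.to_ Z0) ≫ s := hZ.eq_of_src _ _
    calc colimit.ι F i ≫ t ≫ s = (colimit.ι F i ≫ t) ≫ s := by rw [Category.assoc]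
      _ = p ≫ (hZ.to_ Z0) ≫ s := by rw [h2, Category.assoc]
      _ = (p ≫ q) ≫ colimit.ι F j := by rw [← h3, Category.assoc]
      _ = F.map (homOfLE hij) ≫ colimit.ι F j := by rw [hpq]
      _ = colimit.ι F i ≫ 𝟙 _ := by rw [colimit.w, Category.comp_id]
  have hst : s ≫ t = 𝟙 Z0 := hZ0.eq_of_src _ _
  exact hZ0.of_iso ⟨t, s, hts, hst⟩
end

section
/- Let 𝒞 be a category with a zero object, let I be a directed partially ordered set regarded as a category, and let F, G : I → 𝒞 be functors admitting colimits, such that for every i ∈ I the object F(i) is compact, i.e. Hom_𝒞(F(i), −) : 𝒞 → Set preserves filtered colimits. Suppose that for each comparable pair i ≤ j in I there exist isomorphisms α : F(i) ≅ G(i) and β : F(j) ≅ G(j) (possibly depending on the pair (i,j), and not required to be natural) such that β ∘ F(i ≤ j) = G(i ≤ j) ∘ α. Then the colimit of F is a zero object if and only if the colimit of G is a zero object. -/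
open CategoryTheory CategoryTheory.Limits Opposite

universe w v u

/-- If all the colimit injections are zero, the colimit is a zero object. -/
lemma isZero_colimit_of_ι_zero {C : Type u} [Category.{v} C] [HasZeroObject C]
    {I : Type w} [Category.{w} I] (G : I ⥤ C) [HasColimit G] [HasZeroMorphisms C]
    (h : ∀ i, colimit.ι G i = 0) : IsZero (colimit G) := by
  refine (isZero_zero C).of_iso (Iso.mk 0 0 ?_ ?_)
  · apply colimit.hom_ext
    intro j
    simp [h j]
  · exact (isZero_zero C).eq_of_src _ _

/-- If the colimit of a directed system is zero and `X` is a compact object isomorphic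
to `G.obj i`, then some transition map out of `i` vanishes. -/
lemma exists_map_eq_zero_of_isZero_colimit {C : Type u} [Category.{v} C] [HasZeroObject C]
    {I : Type w} [PartialOrder I] [IsDirected I (· ≤ ·)]
    (G : I ⥤ C) [HasColimit G] [HasZeroMorphisms C] (hz : IsZero (colimit G)) (i : I) (X : C)
    [PreservesFilteredColimitsOfSize.{w, w} (coyoneda.obj (op X))] (e : X ≅ G.obj i) :
    ∃ (j : I) (h : i ≤ j), G.map (homOfLE h) = 0 := by
  have : Nonempty I := ⟨i⟩
  have ht := isColimitOfPreserves (coyoneda.obj (op X)) (colimit.isColimit G)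
  have heq : (((coyoneda.obj (op X)).mapCocone (colimit.cocone G)).ι.app i) e.hom =
      (((coyoneda.obj (op X)).mapCocone (colimit.cocone G)).ι.app i) (show X ⟶ G.obj i from 0) :=
    hz.eq_of_tgt _ _
  obtain ⟨k, f, g, hfg⟩ := (Types.FilteredColimit.isColimit_eq_iff _ ht).mp heq
  refine ⟨k, leOfHom f, ?_⟩
  have h1 : e.hom ≫ G.map f = (0 : X ⟶ G.obj i) ≫ G.map g := hfg
  have h2 : G.map f = 0 := by
    have := congrArg (fun t => e.inv ≫ t) h1
    simpa using this
  have : homOfLE (leOfHom f) = f := Subsingleton.elim _ _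
  rw [this, h2]

/-- Part (2) of the paper's Lemma on filtered systems, for an ordinary category with a
zero object: if two directed systems with compact objects (on the `F` side) are
pairwise (non-naturally) isomorphic, then the colimit of `F` is a zero object iff the
colimit of `G` is. -/
theorem colimit_isZero_iff_of_pairwise_iso
    {C : Type u} [Category.{v} C] [HasZeroObject C]
    {I : Type w} [PartialOrder I] [IsDirected I (· ≤ ·)]
    (F G : I ⥤ C) [HasColimit F] [HasColimit G]
    (hcpt : ∀ i : I,
      PreservesFilteredColimitsOfSize.{w, w} (coyoneda.obj (op (F.obj i))))
    (hiso : ∀ i j (hij : i ≤ j), ∃ (α : F.obj i ≅ G.obj i) (β : F.obj j ≅ G.obj j),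
      F.map (homOfLE hij) ≫ β.hom = α.hom ≫ G.map (homOfLE hij)) :
    IsZero (colimit F) ↔ IsZero (colimit G) := by
  letI : HasZeroMorphisms C := HasZeroObject.zeroMorphismsOfZeroObject
  constructor
  · intro hz
    apply isZero_colimit_of_ι_zero
    intro i
    have := hcpt i
    obtain ⟨j, hij, hFzero⟩ :=
      exists_map_eq_zero_of_isZero_colimit F hz i (F.obj i) (Iso.refl _)
    obtain ⟨α, β, hαβ⟩ := hiso i j hij
    have hG : G.map (homOfLE hij) = 0 := by
      have h2 : α.inv ≫ F.map (homOfLE hij) ≫ β.hom = G.map (homOfLE hij) := by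
        rw [hαβ]; simp
      rw [← h2, hFzero]; simp
    rw [← colimit.w G (homOfLE hij), hG, zero_comp]
  · intro hz
    apply isZero_colimit_of_ι_zero
    intro i
    have := hcpt i
    obtain ⟨α₀, β₀, _⟩ := hiso i i le_rfl
    obtain ⟨j, hij, hGzero⟩ :=
      exists_map_eq_zero_of_isZero_colimit G hz i (F.obj i) α₀
    obtain ⟨α, β, hαβ⟩ := hiso i j hij
    have hF : F.map (homOfLE hij) = 0 := by
      have h2 : F.map (homOfLE hij) = α.hom ≫ G.map (homOfLE hij) ≫ β.inv := by
        rw [← Category.assoc, ← hαβ]; simp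
      rw [h2, hGzero]; simp
    rw [← colimit.w F (homOfLE hij), hF, zero_comp]
end
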